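/- Let n ≥ 5 be an integer, ε > 0, and let v : ℝ → ℝ be a four-times continuously differentiable positive solution of the Delaunay ODE with v(0) = ε, v′(0) = 0 and v‴(0) = 0. Then for every t ∈ ℝ, the Hamiltonian energy satisfies H(v)(t) = (1/2)·v″(0)² − (n²(n−4)²/32)·ε² + ((n−4)²(n²−4)/32)·ε^(2n/(n−4)). -/

import Mathlib

open Real

/-- The Delaunay ODE for an integer `n ≥ 5`. -/
def DelaunayODE (n : ℕ) (v : ℝ → ℝ) : Prop :=
  ∀ t : ℝ,
    iteratedDeriv 4 v t - (((n : ℝ) * ((n : ℝ) - 4) + 8) / 2) * iteratedDeriv 2 v t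
      + ((n : ℝ) ^ 2 * ((n : ℝ) - 4) ^ 2 / 16) * v t
      - ((n : ℝ) * ((n : ℝ) - 4) * ((n : ℝ) ^ 2 - 4) / 16)
          * (v t) ^ (((n : ℝ) + 4) / ((n : ℝ) - 4)) = 0

/-- The Hamiltonian energy of a function `v : ℝ → ℝ` for the Delaunay ODE. -/
noncomputable def hamiltonian (n : ℕ) (v : ℝ → ℝ) (t : ℝ) : ℝ :=
  -(deriv v t) * iteratedDeriv 3 v t + (1 / 2) * (iteratedDeriv 2 v t) ^ 2
    + (((n : ℝ) * ((n : ℝ) - 4) + 8) / 4) * (deriv v t) ^ 2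
    - ((n : ℝ) ^ 2 * ((n : ℝ) - 4) ^ 2 / 32) * (v t) ^ 2
    + (((n : ℝ) - 4) ^ 2 * ((n : ℝ) ^ 2 - 4) / 32)
        * (v t) ^ ((2 * (n : ℝ)) / ((n : ℝ) - 4))

lemma ham_hasDerivAt (n : ℕ) (hn : 5 ≤ n)
    (v : ℝ → ℝ) (hv : ContDiff ℝ 4 v) (hpos : ∀ t : ℝ, 0 < v t)
    (hode : DelaunayODE n v) (s : ℝ) :
    HasDerivAt (hamiltonian n v) 0 s := by
  have hn4 : (n : ℝ) - 4 ≠ 0 := by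
    have : (5 : ℝ) ≤ (n : ℝ) := by exact_mod_cast hn
    linarith
  have hd : ∀ k : ℕ, k < 4 → HasDerivAt (iteratedDeriv k v) (iteratedDeriv (k + 1) v s) s := by
    intro k hk
    rw [iteratedDeriv_succ]
    exact ((hv.differentiable_iteratedDeriv k (by exact_mod_cast hk)) s).hasDerivAt
  have h1 := hd 1 (by norm_num)
  rw [iteratedDeriv_one] at h1
  have h2 := hd 2 (by norm_num)
  have h3 := hd 3 (by norm_num)
  have h0 : HasDerivAt v (deriv v s) s := by
    have := hd 0 (by norm_num)
    rwa [iteratedDeriv_zero, show (0 + 1 : ℕ) = 1 from rfl, iteratedDeriv_one] at this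
  have hvne : v s ≠ 0 := (hpos s).ne'
  -- derivative of each term
  have hA : HasDerivAt (fun t => -(deriv v t) * iteratedDeriv 3 v t)
      (-(iteratedDeriv 2 v s) * iteratedDeriv 3 v s
        + -(deriv v s) * iteratedDeriv 4 v s) s := h1.neg.mul h3
  have hB : HasDerivAt (fun t => (1 / 2 : ℝ) * (iteratedDeriv 2 v t) ^ 2)
      ((1 / 2 : ℝ) * (2 * iteratedDeriv 2 v s * iteratedDeriv 3 v s)) s :=
    ((h2.pow 2).const_mul _).congr_deriv (by ring)
  have hC : HasDerivAt (fun t => (((n : ℝ) * ((n : ℝ) - 4) + 8) / 4) * (deriv v t) ^ 2)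
      ((((n : ℝ) * ((n : ℝ) - 4) + 8) / 4) * (2 * deriv v s * iteratedDeriv 2 v s)) s :=
    ((h1.pow 2).const_mul _).congr_deriv (by ring)
  have hD : HasDerivAt (fun t => ((n : ℝ) ^ 2 * ((n : ℝ) - 4) ^ 2 / 32) * (v t) ^ 2)
      (((n : ℝ) ^ 2 * ((n : ℝ) - 4) ^ 2 / 32) * (2 * v s * deriv v s)) s :=
    ((h0.pow 2).const_mul _).congr_deriv (by ring)
  have hE : HasDerivAt (fun t => (((n : ℝ) - 4) ^ 2 * ((n : ℝ) ^ 2 - 4) / 32)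
      * (v t) ^ ((2 * (n : ℝ)) / ((n : ℝ) - 4)))
      ((((n : ℝ) - 4) ^ 2 * ((n : ℝ) ^ 2 - 4) / 32)
        * (deriv v s * ((2 * (n : ℝ)) / ((n : ℝ) - 4))
          * v s ^ ((2 * (n : ℝ)) / ((n : ℝ) - 4) - 1))) s :=
    (h0.rpow_const (Or.inl hvne)).const_mul _
  have hexp : (2 * (n : ℝ)) / ((n : ℝ) - 4) - 1 = ((n : ℝ) + 4) / ((n : ℝ) - 4) := by
    field_simp
    ring
  rw [hexp] at hE
  have hsum := ((((hA.add hB).add hC).sub hD).add hE)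
  have hode' := hode s
  convert hsum using 1
  case e'_4 => rfl
  case e'_5 => rfl
  case e'_8 => rfl
  set x := v s ^ (((n : ℝ) + 4) / ((n : ℝ) - 4))
  have key : iteratedDeriv 4 v s = (((n : ℝ) * ((n : ℝ) - 4) + 8) / 2) * iteratedDeriv 2 v s
      - ((n : ℝ) ^ 2 * ((n : ℝ) - 4) ^ 2 / 16) * v s
      + ((n : ℝ) * ((n : ℝ) - 4) * ((n : ℝ) ^ 2 - 4) / 16) * x := by
    linarith [hode s]
  rw [key]
  field_simp
  ring

theorem hamiltonian_value (n : ℕ) (hn : 5 ≤ n) (ε : ℝ) (hε : 0 < ε)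
    (v : ℝ → ℝ) (hv : ContDiff ℝ 4 v) (hpos : ∀ t : ℝ, 0 < v t)
    (hode : DelaunayODE n v)
    (h0 : v 0 = ε) (h1 : deriv v 0 = 0) (h3 : iteratedDeriv 3 v 0 = 0) (t : ℝ) :
    hamiltonian n v t =
      (1 / 2) * (iteratedDeriv 2 v 0) ^ 2
        - ((n : ℝ) ^ 2 * ((n : ℝ) - 4) ^ 2 / 32) * ε ^ 2
        + (((n : ℝ) - 4) ^ 2 * ((n : ℝ) ^ 2 - 4) / 32)
            * ε ^ ((2 * (n : ℝ)) / ((n : ℝ) - 4)) := by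
  have hconst : hamiltonian n v t = hamiltonian n v 0 :=
    is_const_of_deriv_eq_zero
      (fun s => (ham_hasDerivAt n hn v hv hpos hode s).differentiableAt)
      (fun s => (ham_hasDerivAt n hn v hv hpos hode s).deriv) t 0
  rw [hconst]
  unfold hamiltonian
  rw [h0, h1, h3]
  ring
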